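/- Let D be an integral domain and ⋆ a spectral semistar operation on D defined by a set Δ of primes with D_P a valuation domain for each P ∈ Δ. If (aD ∩ bD)^⋆ is of ⋆-finite type for all nonzero a, b ∈ D, then for every nonzero finitely generated ideal I of D and every nonzero a ∈ D, the ideal (I ∩ aD)^⋆ is of ⋆-finite type. -/

import Mathlib

open Pointwise

section Preamble

variable (D : Type*) [CommRing D] [IsDomain D]
variable (K : Type*) [Field K] [Algebra D K] [IsFractionRing D K]

/-- The localization `D_P` of `D` at a prime `P`, as a subalgebra of the quotient field. -/
noncomputable def locAt (P : Ideal D) (hP : P.IsPrime) : Subalgebra D K :=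
  Localization.subalgebra K P.primeCompl
    (fun x hx => mem_nonZeroDivisors_of_ne_zero (fun h0 : x = 0 => hx (h0 ▸ P.zero_mem)))

/-- `D_P` as a `D`-submodule of the quotient field. -/
noncomputable def locAtM (P : Ideal D) (hP : P.IsPrime) : Submodule D K :=
  Subalgebra.toSubmodule (locAt D K P hP)

variable {D K}

/-- `E` is finitely generated as a module over the subring corresponding to `Rm`. -/
def IsRFG (Rm E : Submodule D K) : Prop :=
  ∃ F₀ : Submodule D K, F₀.FG ∧ F₀ ≠ ⊥ ∧ E = F₀ * Rm

/-- `s` is a semistar operation on the subring corresponding to `Rm`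
(on `D` itself when `Rm = 1`): it is defined on the nonzero `Rm`-submodules of `K`. -/
def IsSemistar (Rm : Submodule D K) (s : Submodule D K → Submodule D K) : Prop :=
  (∀ E, E ≠ ⊥ → Rm * E ≤ E → Rm * s E ≤ s E) ∧
  (∀ (x : K) (E), x ≠ 0 → E ≠ ⊥ → Rm * E ≤ E → s (x • E) = x • s E) ∧
  (∀ E F, E ≠ ⊥ → F ≠ ⊥ → Rm * E ≤ E → Rm * F ≤ F → E ≤ F → s E ≤ s F) ∧
  (∀ E, E ≠ ⊥ → Rm * E ≤ E → E ≤ s E) ∧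
  (∀ E, E ≠ ⊥ → Rm * E ≤ E → s (s E) = s E)

/-- `s` is of finite type. -/
def IsFiniteType (Rm : Submodule D K) (s : Submodule D K → Submodule D K) : Prop :=
  ∀ E, E ≠ ⊥ → Rm * E ≤ E → s E = sSup {G | ∃ F, IsRFG Rm F ∧ F ≤ E ∧ G = s F}

/-- `s` is a.b. -/
def IsAB (Rm : Submodule D K) (s : Submodule D K → Submodule D K) : Prop :=
  ∀ F G H : Submodule D K, IsRFG Rm F → G ≠ ⊥ → Rm * G ≤ G → H ≠ ⊥ → Rm * H ≤ H →
    s (F * G) ≤ s (F * H) → s G ≤ s H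

/-- `s` is e.a.b. -/
def IsEAB (Rm : Submodule D K) (s : Submodule D K → Submodule D K) : Prop :=
  ∀ F G H : Submodule D K, IsRFG Rm F → IsRFG Rm G → IsRFG Rm H →
    s (F * G) ≤ s (F * H) → s G ≤ s H

/-- `s` is stable. -/
def IsStable (Rm : Submodule D K) (s : Submodule D K → Submodule D K) : Prop :=
  ∀ E F, E ≠ ⊥ → F ≠ ⊥ → Rm * E ≤ E → Rm * F ≤ F → s (E ⊓ F) = s E ⊓ s F

/-- The divisorial closure `E ↦ (R : (R : E))` over the subring corresponding to `Rm`. -/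
def vOp (Rm E : Submodule D K) : Submodule D K := Rm / (Rm / E)

/-- The `t`-operation over the subring corresponding to `Rm`. -/
def tOp (Rm E : Submodule D K) : Submodule D K :=
  sSup {G | ∃ F, IsRFG Rm F ∧ F ≤ E ∧ G = vOp Rm F}

end Preamble

set_option maxHeartbeats 1000000

section Helpers

variable {D : Type*} [CommRing D] [IsDomain D]
variable {K : Type*} [Field K] [Algebra D K] [IsFractionRing D K]
variable (P : Ideal D) (hP : P.IsPrime)

theorem aux_mem_iff {x : K} : x ∈ locAtM D K P hP ↔
    ∃ r u : D, u ∈ P.primeCompl ∧ x * algebraMap D K u = algebraMap D K r := by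
  have hinj := IsFractionRing.injective D K
  constructor
  · rintro ⟨r, u, hu, rfl⟩
    refine ⟨r, u, hu, ?_⟩
    rw [IsFractionRing.mk'_eq_div]
    have hu0 : algebraMap D K u ≠ 0 := by
      rw [map_ne_zero_iff _ hinj]
      exact fun h => hu (h ▸ P.zero_mem)
    field_simp
  · rintro ⟨r, u, hu, hx⟩
    refine ⟨r, u, hu, ?_⟩
    rw [IsFractionRing.mk'_eq_div]
    have hu0 : algebraMap D K u ≠ 0 := by
      rw [map_ne_zero_iff _ hinj]
      exact fun h => hu (h ▸ P.zero_mem)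
    field_simp [← hx, mul_comm]
    exact hx

theorem aux_algebraMap_mem (d : D) : algebraMap D K d ∈ locAtM D K P hP :=
  (locAt D K P hP).algebraMap_mem d

theorem aux_one_mem : (1 : K) ∈ locAtM D K P hP := (locAt D K P hP).one_mem

theorem aux_mul_mem {x y : K} (hx : x ∈ locAtM D K P hP) (hy : y ∈ locAtM D K P hP) :
    x * y ∈ locAtM D K P hP := (locAt D K P hP).mul_mem hx hy

theorem aux_inv_mem {u : D} (hu : u ∈ P.primeCompl) :
    (algebraMap D K u)⁻¹ ∈ locAtM D K P hP := by
  rw [aux_mem_iff]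
  have hu0 : algebraMap D K u ≠ 0 := by
    rw [map_ne_zero_iff _ (IsFractionRing.injective D K)]
    exact fun h => hu (h ▸ P.zero_mem)
  exact ⟨1, u, hu, by rw [inv_mul_cancel₀ hu0, map_one]⟩

theorem aux_le_mul (E : Submodule D K) : E ≤ E * locAtM D K P hP := by
  intro x hx
  have h := Submodule.mul_mem_mul hx (aux_one_mem P hP)
  rwa [mul_one] at h

theorem aux_mul_mul (E : Submodule D K) :
    E * locAtM D K P hP * locAtM D K P hP = E * locAtM D K P hP := by
  have h1 : locAtM D K P hP * locAtM D K P hP ≤ locAtM D K P hP :=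
    Submodule.mul_le.2 fun x hx y hy => aux_mul_mem P hP hx hy
  refine le_antisymm ?_ (aux_le_mul P hP _)
  rw [mul_assoc]
  exact mul_le_mul' le_rfl h1

theorem aux_mono {E F : Submodule D K} (hEF : E ≤ F * locAtM D K P hP) :
    E * locAtM D K P hP ≤ F * locAtM D K P hP := by
  calc E * locAtM D K P hP ≤ F * locAtM D K P hP * locAtM D K P hP :=
        mul_le_mul' hEF le_rfl
    _ = F * locAtM D K P hP := aux_mul_mul P hP F

theorem aux_perP {Δ : Set (PrimeSpectrum D)} {E F : Submodule D K}
    (hEq : (⨅ P ∈ Δ, E * locAtM D K P.asIdeal P.isPrime) =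
      ⨅ P ∈ Δ, F * locAtM D K P.asIdeal P.isPrime)
    {P : PrimeSpectrum D} (hP : P ∈ Δ) :
    E * locAtM D K P.asIdeal P.isPrime = F * locAtM D K P.asIdeal P.isPrime := by
  have h1 : ∀ G : Submodule D K, G ≤ ⨅ Q ∈ Δ, G * locAtM D K Q.asIdeal Q.isPrime :=
    fun G => le_iInf fun Q => le_iInf fun _ => aux_le_mul _ _ _
  refine le_antisymm (aux_mono _ _ ?_) (aux_mono _ _ ?_)
  · exact le_trans (le_trans (h1 E) hEq.le) (iInf₂_le P hP)
  · exact le_trans (le_trans (h1 F) hEq.ge) (iInf₂_le P hP)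

theorem aux_dominant (hval : ValuationRing (locAt D K P hP)) (t : Finset D) (ht : t.Nonempty) :
    ∃ b₀ ∈ t, ∀ b ∈ t, ∃ m ∈ locAtM D K P hP,
      algebraMap D K b = algebraMap D K b₀ * m := by
  letI := hval
  classical
  induction t using Finset.induction_on with
  | empty => exact absurd ht (by simp)
  | @insert c t hc ih =>
    rcases t.eq_empty_or_nonempty with rfl | htne
    · refine ⟨c, Finset.mem_insert_self c _, ?_⟩
      intro b hb
      rcases Finset.mem_insert.1 hb with rfl | hb
      · exact ⟨1, aux_one_mem P hP, (mul_one _).symm⟩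
      · simp at hb
    · obtain ⟨b₀, hb₀t, hdom⟩ := ih htne
      obtain ⟨z, hz | hz⟩ := ValuationRing.cond
        (⟨algebraMap D K c, aux_algebraMap_mem P hP c⟩ : locAt D K P hP)
        (⟨algebraMap D K b₀, aux_algebraMap_mem P hP b₀⟩ : locAt D K P hP)
      · -- c * z = b₀, so c dominates b₀ hence all of t
        refine ⟨c, Finset.mem_insert_self c _, ?_⟩
        intro b hb
        rcases Finset.mem_insert.1 hb with rfl | hb
        · exact ⟨1, aux_one_mem P hP, (mul_one _).symm⟩
        · obtain ⟨m, hm, hbm⟩ := hdom b hb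
          have hz' : algebraMap D K c * (z : K) = algebraMap D K b₀ := congrArg Subtype.val hz
          exact ⟨(z : K) * m, aux_mul_mem P hP z.2 hm, by rw [hbm, ← hz', mul_assoc]⟩
      · -- b₀ * z = c
        refine ⟨b₀, Finset.mem_insert_of_mem hb₀t, ?_⟩
        intro b hb
        rcases Finset.mem_insert.1 hb with rfl | hb
        · have hz' : algebraMap D K b₀ * (z : K) = algebraMap D K b := congrArg Subtype.val hz
          exact ⟨(z : K), z.2, hz'.symm⟩
        · exact hdom b hb

theorem aux_sum_le {ι : Type*} (t : Finset ι) (f : ι → Submodule D K) (C : Submodule D K)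
    (hf : ∀ b ∈ t, f b ≤ C) : ∑ b ∈ t, f b ≤ C := by
  classical
  induction t using Finset.induction_on with
  | empty => simp
  | @insert c t hc ih =>
    rw [Finset.sum_insert hc, Submodule.add_eq_sup]
    exact sup_le (hf c (Finset.mem_insert_self _ _))
      (ih fun b hb => hf b (Finset.mem_insert_of_mem hb))

theorem aux_le_sum {ι : Type*} [DecidableEq ι] {t : Finset ι} (f : ι → Submodule D K) {b : ι}
    (hb : b ∈ t) : f b ≤ ∑ c ∈ t, f c := by
  rw [← Finset.add_sum_erase t f hb, Submodule.add_eq_sup]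
  exact le_sup_left

end Helpers

variable {D : Type*} [CommRing D] [IsDomain D]
variable {K : Type*} [Field K] [Algebra D K] [IsFractionRing D K]

/-- under the hypotheses of Statement 17, for every nonzero finitely generated
ideal `I` of `D` and every nonzero `a ∈ D`, `(I ∩ aD)^⋆` is of `⋆`-finite type. -/
theorem stmt18 (Δ : Set (PrimeSpectrum D))
    (hval : ∀ P ∈ Δ, ValuationRing (locAt D K P.asIdeal P.isPrime))
    (h : ∀ a b : D, a ≠ 0 → b ≠ 0 → ∃ F : Submodule D K, F.FG ∧ F ≠ ⊥ ∧
      (⨅ P ∈ Δ, (Submodule.span D {algebraMap D K a} ⊓ Submodule.span D {algebraMap D K b}) *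
          locAtM D K P.asIdeal P.isPrime) =
        ⨅ P ∈ Δ, F * locAtM D K P.asIdeal P.isPrime) :
    ∀ I : Ideal D, I.FG → I ≠ ⊥ → ∀ a : D, a ≠ 0 →
      ∃ F : Submodule D K, F.FG ∧ F ≠ ⊥ ∧
        (⨅ P ∈ Δ, (Submodule.map (Algebra.linearMap D K) I ⊓ Submodule.span D {algebraMap D K a}) *
            locAtM D K P.asIdeal P.isPrime) =
          ⨅ P ∈ Δ, F * locAtM D K P.asIdeal P.isPrime := by
  classical
  intro I hIfg hIne a ha
  have hinj := IsFractionRing.injective D K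
  obtain ⟨s, hs⟩ := hIfg
  set t : Finset D := s.erase 0 with ht
  have htsub : ∀ b ∈ t, b ∈ I := by
    intro b hb
    rw [← hs]
    exact Ideal.subset_span (Finset.mem_of_mem_erase hb)
  have htne0 : ∀ b ∈ t, b ≠ 0 := fun b hb => Finset.ne_of_mem_erase hb
  have hspan : Ideal.span ((t : Finset D) : Set D) = I := by
    rw [← hs]
    refine le_antisymm (Ideal.span_mono ?_) ?_
    · intro x hx; exact Finset.mem_of_mem_erase hx
    · rw [show ((t : Finset D) : Set D) = ((s : Set D) \ {0}) by simp [ht]]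
      show Submodule.span D (s : Set D) ≤ Submodule.span D ((s : Set D) \ {0})
      conv_rhs => rw [← Submodule.span_insert_zero]
      refine Submodule.span_mono ?_
      intro x hx
      by_cases hx0 : x = 0
      · simp [hx0]
      · exact Set.mem_insert_of_mem _ ⟨hx, hx0⟩
  have htne : t.Nonempty := by
    rcases t.eq_empty_or_nonempty with hte | htne
    · exfalso; apply hIne; rw [← hspan, hte]; simp
    · exact htne
  -- choose the finitely generated modules from the hypothesis
  have hc : ∀ b : D, b ≠ 0 → ∃ F : Submodule D K, F.FG ∧ F ≠ ⊥ ∧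
      (⨅ P ∈ Δ, (Submodule.span D {algebraMap D K a} ⊓ Submodule.span D {algebraMap D K b}) *
          locAtM D K P.asIdeal P.isPrime) =
        ⨅ P ∈ Δ, F * locAtM D K P.asIdeal P.isPrime := fun b hb => h a b ha hb
  choose F' hF'fg hF'ne hF'eq using hc
  set Fb : D → Submodule D K := fun b => if hb : b = 0 then ⊥ else F' b hb with hFb
  set F : Submodule D K := ∑ b ∈ t, Fb b with hF
  have hFbfg : ∀ b, (Fb b).FG := by
    intro b
    by_cases hb : b = 0 <;> simp [hFb, hb, Submodule.fg_bot, hF'fg]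
  have hFfg : F.FG := by
    rw [hF]; clear hF hspan htne htsub htne0
    induction t using Finset.induction_on with
    | empty => simpa using Submodule.fg_bot
    | @insert c u hc ih =>
      rw [Finset.sum_insert hc, Submodule.add_eq_sup]
      exact Submodule.FG.sup (hFbfg c) ih
  have hFne : F ≠ ⊥ := by
    obtain ⟨b₁, hb₁⟩ := htne
    have h1 : Fb b₁ ≤ F := aux_le_sum Fb hb₁
    have h2 : Fb b₁ ≠ ⊥ := by
      have := htne0 b₁ hb₁
      simp only [hFb, dif_neg this]
      exact hF'ne b₁ this
    intro hbot
    exact h2 (le_bot_iff.1 (hbot ▸ h1))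
  refine ⟨F, hFfg, hFne, ?_⟩
  refine iInf_congr fun P => iInf_congr fun hP => ?_
  -- key per-prime equality
  set L : Submodule D K := locAtM D K P.asIdeal P.isPrime with hL
  set Gb : D → Submodule D K :=
    fun b => Submodule.span D {algebraMap D K a} ⊓ Submodule.span D {algebraMap D K b} with hGb
  have step2 : ∀ b ∈ t, Fb b * L = Gb b * L := by
    intro b hb
    have hb0 := htne0 b hb
    simp only [hFb, dif_neg hb0]
    exact (aux_perP (hF'eq b hb0) hP).symm
  have sumFL : F * L = (∑ b ∈ t, Gb b) * L := by
    rw [hF, Finset.sum_mul, Finset.sum_mul]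
    exact Finset.sum_congr rfl step2
  rw [sumFL]
  -- now show (map I ⊓ span a) * L = (∑ Gb) * L
  refine le_antisymm ?_ ?_
  · -- hard direction
    refine Submodule.mul_le.2 fun y hy l hl => ?_
    obtain ⟨hyI, hya⟩ := Submodule.mem_inf.1 hy
    obtain ⟨x, hxI, rfl⟩ := Submodule.mem_map.1 hyI
    obtain ⟨c, hcx⟩ := Submodule.mem_span_singleton.1 hya
    have hxca : x = c * a := by
      apply hinj
      rw [map_mul, ← Algebra.smul_def]
      exact hcx.symm
    have hxt : x ∈ Submodule.span D ((t : Finset D) : Set D) := by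
      rw [show Submodule.span D ((t : Finset D) : Set D) = Ideal.span ((t : Finset D) : Set D)
        from rfl, hspan]
      exact hxI
    obtain ⟨f, -, hf⟩ := Submodule.mem_span_finset.1 hxt
    obtain ⟨b₀, hb₀t, hdom⟩ := aux_dominant P.asIdeal P.isPrime (hval P hP) t htne
    choose m hmL hmb using hdom
    set M : K := ∑ b ∈ t.attach, algebraMap D K (f b.1) * m b.1 b.2 with hM
    have hML : M ∈ L := by
      refine Submodule.sum_mem _ fun b _ => ?_
      exact aux_mul_mem _ _ (aux_algebraMap_mem _ _ _) (hmL b.1 b.2)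
    have hxM : algebraMap D K x = algebraMap D K b₀ * M := by
      rw [hM, Finset.mul_sum]
      have : ∀ b ∈ t.attach, algebraMap D K b₀ * (algebraMap D K (f b.1) * m b.1 b.2) =
          algebraMap D K (f b.1 * b.1) := by
        intro b _
        rw [map_mul, ← mul_assoc, mul_comm (algebraMap D K b₀), mul_assoc, ← hmb b.1 b.2]
      rw [Finset.sum_congr rfl this]
      rw [Finset.sum_attach t (fun b => algebraMap D K (f b * b))]
      rw [← map_sum]
      congr 1
      rw [← hf]
      exact Finset.sum_congr rfl fun b _ => by rw [smul_eq_mul]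
    obtain ⟨σ, u, hu, hMu⟩ := (aux_mem_iff P.asIdeal P.isPrime).1 hML
    have hu0 : algebraMap D K u ≠ 0 := by
      rw [map_ne_zero_iff _ hinj]
      exact fun h0 => hu (h0 ▸ P.asIdeal.zero_mem)
    have hxu : x * u = b₀ * σ := by
      apply hinj
      rw [map_mul, map_mul, hxM, mul_assoc, hMu]
    have hxval : algebraMap D K x = algebraMap D K (b₀ * σ) * (algebraMap D K u)⁻¹ := by
      rw [← hxu, map_mul]
      field_simp
    have hmemG : algebraMap D K (b₀ * σ) ∈ Gb b₀ := by
      refine Submodule.mem_inf.2 ⟨?_, ?_⟩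
      · refine Submodule.mem_span_singleton.2 ⟨c * u, ?_⟩
        rw [Algebra.smul_def, ← map_mul]
        congr 1
        rw [← hxu, hxca]; ring
      · exact Submodule.mem_span_singleton.2 ⟨σ, by rw [Algebra.smul_def, ← map_mul, mul_comm]⟩
    have hlmem : (algebraMap D K u)⁻¹ * l ∈ L :=
      aux_mul_mem _ _ (aux_inv_mem P.asIdeal P.isPrime hu) hl
    have : (Algebra.linearMap D K) x * l ∈ Gb b₀ * L := by
      have heq : (Algebra.linearMap D K) x * l
          = algebraMap D K (b₀ * σ) * ((algebraMap D K u)⁻¹ * l) := by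
        show algebraMap D K x * l = _
        rw [hxval]; ring
      rw [heq]
      exact Submodule.mul_mem_mul hmemG hlmem
    exact mul_le_mul' (aux_le_sum Gb hb₀t) le_rfl this
  · -- easy direction
    refine mul_le_mul' (aux_sum_le _ _ _ ?_) le_rfl
    intro b hb
    refine le_inf (le_trans inf_le_right ?_) inf_le_left
    rw [Submodule.span_le]
    rintro y ⟨rfl⟩
    exact Submodule.mem_map.2 ⟨b, htsub b hb, rfl⟩
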